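/- Let q_1, q_2, q_3 be three distinct points in ℝ³ and let w = (w', w'') ∈ ℝ³ × ℝ³ = ℝ⁶ be a point lying on each of the double-spheres Z_{q_i} = S_{q_i} × S_{q_i} (where S_q denotes the unit sphere centered at q). Then the sum of the tangent spaces T_w Z_{q_1} + T_w Z_{q_2} + T_w Z_{q_3} is all of ℝ⁶. -/

import Mathlib

/-- The tangent space to the unit sphere centered at `p` at the point `u`:
`{v : v ⬝ (u - p) = 0}`. -/
noncomputable def TS (p u : EuclideanSpace ℝ (Fin 3)) :
    Submodule ℝ (EuclideanSpace ℝ (Fin 3)) := (Submodule.span ℝ {u - p})ᗮ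

/-- The tangent space to the double-sphere `Z_p = S_p × S_p` at `w = (w₁, w₂)`. -/
noncomputable def TZ (p w₁ w₂ : EuclideanSpace ℝ (Fin 3)) :
    Submodule ℝ (EuclideanSpace ℝ (Fin 3) × EuclideanSpace ℝ (Fin 3)) :=
  (TS p w₁).prod (TS p w₂)

lemma key (a b : EuclideanSpace ℝ (Fin 3)) (ha : ‖a‖ = 1) (hb : ‖b‖ = 1)
    (h1 : a ≠ b) (h2 : a ≠ -b) :
    (Submodule.span ℝ {a})ᗮ ⊔ (Submodule.span ℝ {b})ᗮ = ⊤ := by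
  have hinf : Submodule.span ℝ {a} ⊓ Submodule.span ℝ {b} = ⊥ := by
    rw [Submodule.eq_bot_iff]
    intro x hx
    rw [Submodule.mem_inf] at hx
    obtain ⟨hx1, hx2⟩ := hx
    rw [Submodule.mem_span_singleton] at hx1 hx2
    obtain ⟨s, rfl⟩ := hx1
    obtain ⟨t, hst⟩ := hx2
    by_contra hx
    have hs : s ≠ 0 := by rintro rfl; simp at hx
    have ht : t ≠ 0 := by rintro rfl; simp at hst; exact hx hst.symm
    have hab : a = (t / s) • b := by
      rw [div_eq_mul_inv, mul_comm, mul_smul, hst, smul_smul,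
        inv_mul_cancel₀ hs, one_smul]
    have hnorm : |t / s| = 1 := by
      have := congrArg norm hab
      rw [norm_smul, ha, hb, Real.norm_eq_abs, mul_one] at this
      exact this.symm
    rcases abs_eq (zero_le_one : (0:ℝ) ≤ 1) |>.mp hnorm with h | h
    · rw [h, one_smul] at hab; exact h1 hab
    · rw [h, neg_one_smul] at hab; exact h2 hab
  have horth : ((Submodule.span ℝ {a})ᗮ ⊔ (Submodule.span ℝ {b})ᗮ)ᗮ = ⊥ := by
    rw [← (Submodule.span ℝ {a}).orthogonal_orthogonal,
      ← (Submodule.span ℝ {b}).orthogonal_orthogonal] at hinf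
    rw [Submodule.inf_orthogonal] at hinf
    exact hinf
  have := congrArg (fun (K : Submodule ℝ (EuclideanSpace ℝ (Fin 3))) => Kᗮ) horth
  simpa [Submodule.orthogonal_orthogonal] using this

lemma ts_sup (q₁ q₂ q₃ w : EuclideanSpace ℝ (Fin 3))
    (hq12 : q₁ ≠ q₂) (hq13 : q₁ ≠ q₃) (hq23 : q₂ ≠ q₃)
    (d1 : dist w q₁ = 1) (d2 : dist w q₂ = 1) (d3 : dist w q₃ = 1) :
    TS q₁ w ⊔ TS q₂ w ⊔ TS q₃ w = ⊤ := by
  have n1 : ‖w - q₁‖ = 1 := by rw [← dist_eq_norm]; exact d1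
  have n2 : ‖w - q₂‖ = 1 := by rw [← dist_eq_norm]; exact d2
  have n3 : ‖w - q₃‖ = 1 := by rw [← dist_eq_norm]; exact d3
  have e12 : w - q₁ ≠ w - q₂ := fun h => hq12 (sub_right_injective h)
  have e13 : w - q₁ ≠ w - q₃ := fun h => hq13 (sub_right_injective h)
  have e23 : w - q₂ ≠ w - q₃ := fun h => hq23 (sub_right_injective h)
  by_cases hneg : w - q₁ = -(w - q₂)
  · -- then w - q₁ and w - q₃ are independent
    have h13 : w - q₁ ≠ -(w - q₃) := by
      intro h
      apply e23
      rw [hneg] at h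
      exact neg_injective h
    have := key (w - q₁) (w - q₃) n1 n3 e13 h13
    rw [eq_top_iff]
    calc ⊤ = TS q₁ w ⊔ TS q₃ w := this.symm
    _ ≤ TS q₁ w ⊔ TS q₂ w ⊔ TS q₃ w := by
        apply sup_le
        · exact le_sup_of_le_left le_sup_left
        · exact le_sup_right
  · have := key (w - q₁) (w - q₂) n1 n2 e12 hneg
    rw [eq_top_iff]
    calc ⊤ = TS q₁ w ⊔ TS q₂ w := this.symm
    _ ≤ TS q₁ w ⊔ TS q₂ w ⊔ TS q₃ w := le_sup_left

theorem stmt2 (q₁ q₂ q₃ : EuclideanSpace ℝ (Fin 3))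
    (hq12 : q₁ ≠ q₂) (hq13 : q₁ ≠ q₃) (hq23 : q₂ ≠ q₃)
    (w₁ w₂ : EuclideanSpace ℝ (Fin 3))
    (h1 : dist w₁ q₁ = 1 ∧ dist w₂ q₁ = 1)
    (h2 : dist w₁ q₂ = 1 ∧ dist w₂ q₂ = 1)
    (h3 : dist w₁ q₃ = 1 ∧ dist w₂ q₃ = 1) :
    TZ q₁ w₁ w₂ ⊔ TZ q₂ w₁ w₂ ⊔ TZ q₃ w₁ w₂ = ⊤ := by
  unfold TZ
  rw [Submodule.prod_sup_prod, Submodule.prod_sup_prod,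
    ts_sup q₁ q₂ q₃ w₁ hq12 hq13 hq23 h1.1 h2.1 h3.1,
    ts_sup q₁ q₂ q₃ w₂ hq12 hq13 hq23 h1.2 h2.2 h3.2]
  exact Submodule.prod_top
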